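/- Let S be a commutative semiring with 0 and 1, n ≥ 1 and Σ an alphabet. For all u, v ∈ Σ* and every path π in Γ_{n,Σ}, one has f_π^{uv} = Σ_{π = αβ} f_α^u · f_β^v as formal polynomials in S[X_{n,Σ}], where the sum ranges over all factorizations of π into a path α followed by a path β (including empty factors). Moreover, for the empty word ε, f_π^ε = 1 if π is an empty path and f_π^ε = 0 otherwise. Consequently, the map ρ : Σ* → (paths of Γ_{n,Σ} → S[X_{n,Σ}]), w ↦ (π ↦ f_π^w), is a monoid homomorphism into the multiplicative monoid given by the convolution product (fg)(π) = Σ_{π = αβ} f(α)g(β) with identity the indicator of empty paths. -/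

import Mathlib

attribute [local instance] Classical.propDecidable

open scoped BigOperators

/-- The submonoid of upper triangular `n × n` matrices over `S`. -/
def UT (n : ℕ) (S : Type*) [CommSemiring S] : Submonoid (Matrix (Fin n) (Fin n) S) where
  carrier := {A | ∀ i j : Fin n, j < i → A i j = 0}
  one_mem' := fun i j hij => Matrix.one_apply_ne (ne_of_gt hij)
  mul_mem' := by
    intro a b ha hb i j hij
    rw [Matrix.mul_apply]
    apply Finset.sum_eq_zero
    intro k _
    rcases lt_or_ge k i with h | h
    · rw [ha i k h, zero_mul]
    · rw [hb k j (lt_of_lt_of_le hij h), mul_zero]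

/-- A path in the loop-free quiver `Γ_{n,Σ}`: a start vertex together with a list of
labelled edges, the visited vertices being strictly increasing. -/
structure QPath (n : ℕ) (A : Type*) where
  start : Fin n
  steps : List (A × Fin n)
  chain : List.Chain' (· < ·) (start :: steps.map Prod.snd)

namespace QPath

variable {n : ℕ} {A : Type*}

/-- The `j`-th vertex visited by the path. -/
def vtx (π : QPath n A) (j : ℕ) : Fin n :=
  (π.start :: π.steps.map Prod.snd).getD j π.start

/-- The label of a path. -/
def label (π : QPath n A) : List A := π.steps.map Prod.fst

/-- The final vertex of a path. -/
def last (π : QPath n A) : Fin n := π.vtx π.steps.length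

end QPath

/-- `p` is an occurrence of the path `π` in the word `w`. -/
def IsOcc {n : ℕ} {A : Type*} (π : QPath n A) (w : List A)
    (p : Fin π.steps.length → Fin w.length) : Prop :=
  (∀ j k, j < k → p j < p k) ∧ ∀ j, w.get (p j) = (π.steps.get j).1

/-- The monomial corresponding to an occurrence. -/
noncomputable def occMonomial (S : Type*) [CommSemiring S] {n : ℕ} {A : Type*}
    (π : QPath n A) (w : List A) (p : Fin π.steps.length → Fin w.length) :
    MvPolynomial (A × Fin n) S :=
  ∏ i : Fin w.length,
    if ∃ j, p j = i then 1
    else MvPolynomial.X (w.get i, π.vtx (Finset.univ.filter (fun j => p j < i)).card)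

/-- The formal polynomial `f_π^w`. -/
noncomputable def fPoly (S : Type*) [CommSemiring S] {n : ℕ} {A : Type*}
    (π : QPath n A) (w : List A) : MvPolynomial (A × Fin n) S :=
  ∑ p ∈ Finset.univ.filter (IsOcc π w), occMonomial S π w p

namespace QPath
variable {n : ℕ} {A : Type*}

/-- The initial segment of a path consisting of its first `j` edges. -/
def take (π : QPath n A) (j : ℕ) : QPath n A :=
  ⟨π.start, π.steps.take j, by
    have h : (π.start :: (π.steps.take j).map Prod.snd) =
        (π.start :: π.steps.map Prod.snd).take (j + 1) := by
      simp [List.map_take]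
    rw [h]
    exact π.chain.take _⟩

/-- The final segment of a path obtained by removing its first `j` edges. -/
def drop (π : QPath n A) (j : ℕ) : QPath n A :=
  ⟨π.vtx j, π.steps.drop j, by
    rcases le_or_gt j π.steps.length with hj | hj
    · have hlen : j < (π.start :: π.steps.map Prod.snd).length := by
        simp; omega
      have h : π.vtx j :: (π.steps.drop j).map Prod.snd =
          (π.start :: π.steps.map Prod.snd).drop j := by
        rw [List.map_drop, List.drop_eq_getElem_cons hlen, List.drop_succ_cons]
        congr 1
        exact List.getD_eq_getElem _ _ hlen
      rw [h]
      exact π.chain.drop _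
    · have h : π.steps.drop j = [] := List.drop_eq_nil_of_le (by omega)
      rw [h]
      exact List.isChain_singleton _⟩

end QPath

section Helpers

open Finset

attribute [local instance] Classical.propDecidable

variable {n : ℕ} {A : Type*}

lemma take_steps_len (π : QPath n A) (j : ℕ) :
    (π.take j).steps.length = min j π.steps.length := by
  simp [QPath.take]

lemma drop_steps_len (π : QPath n A) (j : ℕ) :
    (π.drop j).steps.length = π.steps.length - j := by
  simp [QPath.drop]

lemma take_steps_getElem (π : QPath n A) (j a : ℕ) (h : a < (π.take j).steps.length) :
    (π.take j).steps[a] = π.steps[a]'(by rw [take_steps_len] at h; omega) := by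
  simp [QPath.take, List.getElem_take]

lemma drop_steps_getElem (π : QPath n A) (j b : ℕ) (h : b < (π.drop j).steps.length) :
    (π.drop j).steps[b] = π.steps[j + b]'(by rw [drop_steps_len] at h; omega) := by
  simp [QPath.drop, List.getElem_drop]

lemma vtx_eq_getElem (π : QPath n A) (l : ℕ) (h : l ≤ π.steps.length) :
    π.vtx l = (π.start :: π.steps.map Prod.snd)[l]'(by simp; omega) :=
  List.getD_eq_getElem _ _ _

lemma vtx_take (π : QPath n A) (j c : ℕ) (h : c ≤ (π.take j).steps.length) :
    (π.take j).vtx c = π.vtx c := by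
  rw [take_steps_len] at h
  rw [vtx_eq_getElem _ _ (by rw [take_steps_len]; omega), vtx_eq_getElem _ _ (by omega)]
  cases c with
  | zero => rfl
  | succ c =>
    show ((π.take j).steps.map Prod.snd)[c]'_ = (π.steps.map Prod.snd)[c]'_
    simp [QPath.take, List.map_take, List.getElem_take]

lemma vtx_drop (π : QPath n A) (j c : ℕ) (hj : j ≤ π.steps.length)
    (h : c ≤ (π.drop j).steps.length) :
    (π.drop j).vtx c = π.vtx (j + c) := by
  rw [drop_steps_len] at h
  rw [vtx_eq_getElem _ _ (by rw [drop_steps_len]; omega),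
    vtx_eq_getElem _ _ (by omega)]
  cases c with
  | zero =>
    show (π.drop j).start = _
    show π.vtx j = _
    rw [vtx_eq_getElem _ _ (by omega)]
    simp
  | succ c =>
    show ((π.drop j).steps.map Prod.snd)[c]'_ = (π.steps.map Prod.snd)[j + c]'_
    simp [QPath.drop, List.map_drop, List.getElem_drop]

lemma mem_iff_lt_card {k : ℕ} (T : Finset (Fin k))
    (hT : ∀ a b : Fin k, a ≤ b → b ∈ T → a ∈ T) (i : Fin k) :
    i ∈ T ↔ (i : ℕ) < T.card := by
  constructor
  · intro hi
    have hsub : Finset.Iic i ⊆ T := fun a ha => hT a i (Finset.mem_Iic.mp ha) hi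
    have h1 := Finset.card_le_card hsub
    have h2 : (Finset.Iic i).card = (i : ℕ) + 1 := by
      exact Fin.card_Iic i
    omega
  · intro hi
    by_contra hni
    have hsub : T ⊆ Finset.Iio i := by
      intro a ha
      rw [Finset.mem_Iio]
      by_contra hai
      exact hni (hT i a (le_of_not_gt hai) ha)
    have h1 := Finset.card_le_card hsub
    have h2 : (Finset.Iio i).card = (i : ℕ) := Fin.card_Iio i
    omega

end Helpers
section Helpers2

open Finset

attribute [local instance] Classical.propDecidable

variable {n : ℕ} {A : Type*}

/-- Number of indices of `p` landing in the first `m` positions. -/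
noncomputable def splitIdx {k L : ℕ} (m : ℕ) (p : Fin k → Fin L) : ℕ :=
  ((Finset.univ : Finset (Fin k)).filter fun i => (p i : ℕ) < m).card

lemma splitIdx_le {k L m : ℕ} (p : Fin k → Fin L) : splitIdx m p ≤ k := by
  refine le_trans (Finset.card_filter_le _ _) ?_
  simp

lemma char_of {π : QPath n A} {u v : List A} {p : Fin π.steps.length → Fin (u ++ v).length}
    (hocc : IsOcc π (u ++ v) p) (i : Fin π.steps.length) :
    (p i : ℕ) < u.length ↔ (i : ℕ) < splitIdx u.length p := by
  have := mem_iff_lt_card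
    (((Finset.univ : Finset (Fin π.steps.length)).filter fun i => (p i : ℕ) < u.length))
    (fun a b hab hb => by
      simp only [Finset.mem_filter, Finset.mem_univ, true_and] at *
      rcases lt_or_eq_of_le hab with h | h
      · exact lt_of_le_of_lt (le_of_lt (hocc.1 a b h)) hb
      · rw [h]; exact hb) i
  simpa [splitIdx] using this

lemma card_filter_val_lt {k j : ℕ} (hj : j ≤ k) :
    (((Finset.univ : Finset (Fin k))).filter fun i : Fin k => (i : ℕ) < j).card = j := by
  have h : (((Finset.univ : Finset (Fin k))).filter fun i : Fin k => (i : ℕ) < j).card =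
      (Finset.univ : Finset (Fin j)).card := by
    refine Finset.card_bij'
      (fun i hi => (⟨(i : ℕ), by simp only [Finset.mem_filter] at hi; exact hi.2⟩ : Fin j))
      (fun (a : Fin j) _ => (⟨(a : ℕ), by omega⟩ : Fin k))
      (fun a ha => Finset.mem_univ _)
      (fun a ha => Finset.mem_filter.mpr ⟨Finset.mem_univ _, a.isLt⟩)
      (fun a ha => by apply Fin.ext; rfl)
      (fun a ha => by apply Fin.ext; rfl)
  rw [h, Finset.card_univ, Fintype.card_fin]

/-- First component of the splitting of an occurrence. -/
noncomputable def fwdA (π : QPath n A) (u v : List A) (j : ℕ)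
    (p : Fin π.steps.length → Fin (u ++ v).length)
    (hch : ∀ i : Fin π.steps.length, (p i : ℕ) < u.length ↔ (i : ℕ) < j) :
    Fin (π.take j).steps.length → Fin u.length := fun a =>
  have ha : (a : ℕ) < π.steps.length := by
    have h0 := take_steps_len π j; have := a.isLt; omega
  ⟨(p ⟨a, ha⟩ : ℕ), (hch ⟨a, ha⟩).mpr (by
    show (a : ℕ) < j
    have h0 := take_steps_len π j; have := a.isLt; omega)⟩

/-- Second component of the splitting of an occurrence. -/
noncomputable def fwdB (π : QPath n A) (u v : List A) (j : ℕ)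
    (hj : j ≤ π.steps.length)
    (p : Fin π.steps.length → Fin (u ++ v).length)
    (hch : ∀ i : Fin π.steps.length, (p i : ℕ) < u.length ↔ (i : ℕ) < j) :
    Fin (π.drop j).steps.length → Fin v.length := fun b =>
  have hb : j + (b : ℕ) < π.steps.length := by
    have h0 := drop_steps_len π j; have := b.isLt; omega
  ⟨(p ⟨j + (b : ℕ), hb⟩ : ℕ) - u.length, by
    have h1 := (p ⟨j + (b : ℕ), hb⟩).isLt
    have hL : (u ++ v).length = u.length + v.length := List.length_append
    have h2 : ¬ ((p ⟨j + (b : ℕ), hb⟩ : ℕ) < u.length) := by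
      rw [hch]
      show ¬ j + (b : ℕ) < j
      omega
    omega⟩

/-- Gluing of two occurrences. -/
noncomputable def bwd (π : QPath n A) (u v : List A) (j : ℕ) (hj : j ≤ π.steps.length)
    (q₁ : Fin (π.take j).steps.length → Fin u.length)
    (q₂ : Fin (π.drop j).steps.length → Fin v.length) :
    Fin π.steps.length → Fin (u ++ v).length := fun i =>
  if h : (i : ℕ) < j then
    have ha : (i : ℕ) < (π.take j).steps.length := by rw [take_steps_len]; omega
    ⟨(q₁ ⟨(i : ℕ), ha⟩ : ℕ), by
      have := (q₁ ⟨(i : ℕ), ha⟩).isLt; rw [List.length_append]; omega⟩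
  else
    have hb : (i : ℕ) - j < (π.drop j).steps.length := by
      rw [drop_steps_len]; have := i.isLt; omega
    ⟨u.length + (q₂ ⟨(i : ℕ) - j, hb⟩ : ℕ), by
      have := (q₂ ⟨(i : ℕ) - j, hb⟩).isLt; rw [List.length_append]; omega⟩

lemma bwd_val_of_lt (π : QPath n A) (u v : List A) (j : ℕ) (hj : j ≤ π.steps.length)
    (q₁ : Fin (π.take j).steps.length → Fin u.length)
    (q₂ : Fin (π.drop j).steps.length → Fin v.length)
    (i : Fin π.steps.length) (h : (i : ℕ) < j) :
    (bwd π u v j hj q₁ q₂ i : ℕ) =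
      (q₁ ⟨(i : ℕ), by rw [take_steps_len]; omega⟩ : ℕ) := by
  unfold bwd
  rw [dif_pos h]

lemma bwd_val_of_ge (π : QPath n A) (u v : List A) (j : ℕ) (hj : j ≤ π.steps.length)
    (q₁ : Fin (π.take j).steps.length → Fin u.length)
    (q₂ : Fin (π.drop j).steps.length → Fin v.length)
    (i : Fin π.steps.length) (h : ¬ (i : ℕ) < j) :
    (bwd π u v j hj q₁ q₂ i : ℕ) =
      u.length + (q₂ ⟨(i : ℕ) - j, by rw [drop_steps_len]; have := i.isLt; omega⟩ : ℕ) := by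
  unfold bwd
  rw [dif_neg h]

lemma bwd_char (π : QPath n A) (u v : List A) (j : ℕ) (hj : j ≤ π.steps.length)
    (q₁ : Fin (π.take j).steps.length → Fin u.length)
    (q₂ : Fin (π.drop j).steps.length → Fin v.length)
    (i : Fin π.steps.length) :
    (bwd π u v j hj q₁ q₂ i : ℕ) < u.length ↔ (i : ℕ) < j := by
  by_cases h : (i : ℕ) < j
  · rw [bwd_val_of_lt π u v j hj q₁ q₂ i h]
    simp only [h, iff_true]
    exact (q₁ _).isLt
  · rw [bwd_val_of_ge π u v j hj q₁ q₂ i h]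
    simp [h]

end Helpers2
section Helpers3

open Finset

attribute [local instance] Classical.propDecidable

variable {n : ℕ} {A : Type*}

lemma getElem_idx_congr {α : Type*} (l : List α) {i j : ℕ} (h : i = j) (hi : i < l.length) :
    l[i]'hi = l[j]'(h ▸ hi) := by subst h; rfl

lemma isOcc_fwdA (π : QPath n A) (u v : List A) (j : ℕ)
    (p : Fin π.steps.length → Fin (u ++ v).length)
    (hocc : IsOcc π (u ++ v) p)
    (hch : ∀ i : Fin π.steps.length, (p i : ℕ) < u.length ↔ (i : ℕ) < j) :
    IsOcc (π.take j) u (fwdA π u v j p hch) := by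
  constructor
  · intro a b hab
    show (fwdA π u v j p hch a : ℕ) < (fwdA π u v j p hch b : ℕ)
    exact hocc.1 _ _ (by exact hab)
  · intro a
    have ha : (a : ℕ) < π.steps.length := by
      have h0 := take_steps_len π j; have := a.isLt; omega
    have hlt : (p ⟨(a : ℕ), ha⟩ : ℕ) < u.length := (fwdA π u v j p hch a).isLt
    have h2 := hocc.2 ⟨(a : ℕ), ha⟩
    simp only [List.get_eq_getElem] at h2 ⊢
    show u[(p ⟨(a : ℕ), ha⟩ : ℕ)]'hlt = ((π.take j).steps[(a : ℕ)]'a.isLt).1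
    rw [take_steps_getElem π j a a.isLt, ← h2]
    exact (List.getElem_append_left hlt).symm

lemma isOcc_fwdB (π : QPath n A) (u v : List A) (j : ℕ) (hj : j ≤ π.steps.length)
    (p : Fin π.steps.length → Fin (u ++ v).length)
    (hocc : IsOcc π (u ++ v) p)
    (hch : ∀ i : Fin π.steps.length, (p i : ℕ) < u.length ↔ (i : ℕ) < j) :
    IsOcc (π.drop j) v (fwdB π u v j hj p hch) := by
  have hge : ∀ (b : ℕ) (hb : j + b < π.steps.length),
      u.length ≤ (p ⟨j + b, hb⟩ : ℕ) := by
    intro b hb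
    have := (hch ⟨j + b, hb⟩).not.mpr (by show ¬ j + b < j; omega)
    omega
  constructor
  · intro a b hab
    have ha : j + (a : ℕ) < π.steps.length := by
      have h0 := drop_steps_len π j; have := a.isLt; omega
    have hb : j + (b : ℕ) < π.steps.length := by
      have h0 := drop_steps_len π j; have := b.isLt; omega
    have hmono : (p ⟨j + (a : ℕ), ha⟩ : ℕ) < (p ⟨j + (b : ℕ), hb⟩ : ℕ) :=
      hocc.1 _ _ (by show j + (a : ℕ) < j + (b : ℕ); exact Nat.add_lt_add_left hab j)
    show (p ⟨j + (a : ℕ), ha⟩ : ℕ) - u.length < (p ⟨j + (b : ℕ), hb⟩ : ℕ) - u.length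
    have := hge (a : ℕ) ha
    have := hge (b : ℕ) hb
    omega
  · intro b
    have hb : j + (b : ℕ) < π.steps.length := by
      have h0 := drop_steps_len π j; have := b.isLt; omega
    have h2 := hocc.2 ⟨j + (b : ℕ), hb⟩
    simp only [List.get_eq_getElem] at h2 ⊢
    show v[(p ⟨j + (b : ℕ), hb⟩ : ℕ) - u.length]'(fwdB π u v j hj p hch b).isLt =
      ((π.drop j).steps[(b : ℕ)]'b.isLt).1
    rw [drop_steps_getElem π j b b.isLt, ← h2]
    exact (List.getElem_append_right (hge (b : ℕ) hb)).symm

lemma isOcc_bwd (π : QPath n A) (u v : List A) (j : ℕ) (hj : j ≤ π.steps.length)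
    (q₁ : Fin (π.take j).steps.length → Fin u.length)
    (q₂ : Fin (π.drop j).steps.length → Fin v.length)
    (h₁ : IsOcc (π.take j) u q₁) (h₂ : IsOcc (π.drop j) v q₂) :
    IsOcc π (u ++ v) (bwd π u v j hj q₁ q₂) := by
  have hL : (u ++ v).length = u.length + v.length := List.length_append
  constructor
  · intro a b hab
    have hab' : (a : ℕ) < (b : ℕ) := hab
    show (bwd π u v j hj q₁ q₂ a : ℕ) < (bwd π u v j hj q₁ q₂ b : ℕ)
    by_cases ha : (a : ℕ) < j <;> by_cases hb : (b : ℕ) < j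
    · rw [bwd_val_of_lt π u v j hj q₁ q₂ a ha, bwd_val_of_lt π u v j hj q₁ q₂ b hb]
      exact h₁.1 _ _ (by show (a : ℕ) < (b : ℕ); omega)
    · rw [bwd_val_of_lt π u v j hj q₁ q₂ a ha, bwd_val_of_ge π u v j hj q₁ q₂ b hb]
      have := (q₁ ⟨(a : ℕ), by have h0 := take_steps_len π j; omega⟩).isLt
      omega
    · omega
    · rw [bwd_val_of_ge π u v j hj q₁ q₂ a ha, bwd_val_of_ge π u v j hj q₁ q₂ b hb]
      have pa : (a : ℕ) - j < (π.drop j).steps.length := by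
        have h0 := drop_steps_len π j; have := a.isLt; omega
      have pb : (b : ℕ) - j < (π.drop j).steps.length := by
        have h0 := drop_steps_len π j; have := b.isLt; omega
      have h3 : (q₂ ⟨(a : ℕ) - j, pa⟩ : ℕ) < (q₂ ⟨(b : ℕ) - j, pb⟩ : ℕ) :=
        h₂.1 ⟨(a : ℕ) - j, pa⟩ ⟨(b : ℕ) - j, pb⟩ (by show (a : ℕ) - j < (b : ℕ) - j; omega)
      omega
  · intro i
    by_cases hi : (i : ℕ) < j
    · have ha : (i : ℕ) < (π.take j).steps.length := by
        have h0 := take_steps_len π j; omega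
      have pf : (q₁ ⟨(i : ℕ), ha⟩ : ℕ) < (u ++ v).length := by
        have := (q₁ ⟨(i : ℕ), ha⟩).isLt; omega
      have heq : bwd π u v j hj q₁ q₂ i =
          (⟨(q₁ ⟨(i : ℕ), ha⟩ : ℕ), pf⟩ : Fin (u ++ v).length) :=
        Fin.ext (bwd_val_of_lt π u v j hj q₁ q₂ i hi)
      rw [heq]
      simp only [List.get_eq_getElem]
      rw [List.getElem_append_left (q₁ ⟨(i : ℕ), ha⟩).isLt]
      have hq := h₁.2 ⟨(i : ℕ), ha⟩
      simp only [List.get_eq_getElem] at hq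
      rw [take_steps_getElem π j (i : ℕ) ha] at hq
      exact hq
    · have hb : (i : ℕ) - j < (π.drop j).steps.length := by
        have h0 := drop_steps_len π j; have := i.isLt; omega
      have pf : u.length + (q₂ ⟨(i : ℕ) - j, hb⟩ : ℕ) < (u ++ v).length := by
        have := (q₂ ⟨(i : ℕ) - j, hb⟩).isLt; omega
      have heq : bwd π u v j hj q₁ q₂ i =
          (⟨u.length + (q₂ ⟨(i : ℕ) - j, hb⟩ : ℕ), pf⟩ : Fin (u ++ v).length) :=
        Fin.ext (bwd_val_of_ge π u v j hj q₁ q₂ i hi)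
      rw [heq]
      simp only [List.get_eq_getElem]
      rw [List.getElem_append_right (Nat.le_add_right _ _)]
      have hq := h₂.2 ⟨(i : ℕ) - j, hb⟩
      simp only [List.get_eq_getElem] at hq
      rw [drop_steps_getElem π j ((i : ℕ) - j) hb] at hq
      rw [getElem_idx_congr v (by omega : u.length + (q₂ ⟨(i : ℕ) - j, hb⟩ : ℕ) - u.length
        = (q₂ ⟨(i : ℕ) - j, hb⟩ : ℕ))]
      rw [hq]
      congr 1
      exact getElem_idx_congr _ (by omega)
        (by have := i.isLt; omega)

lemma splitIdx_bwd (π : QPath n A) (u v : List A) (j : ℕ) (hj : j ≤ π.steps.length)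
    (q₁ : Fin (π.take j).steps.length → Fin u.length)
    (q₂ : Fin (π.drop j).steps.length → Fin v.length) :
    splitIdx u.length (bwd π u v j hj q₁ q₂) = j := by
  unfold splitIdx
  rw [Finset.filter_congr (fun i _ => by
    rw [show ((bwd π u v j hj q₁ q₂ i : ℕ) < u.length) = ((i : ℕ) < j) from
      propext (bwd_char π u v j hj q₁ q₂ i)])]
  exact card_filter_val_lt hj

lemma bwd_fwd (π : QPath n A) (u v : List A) (j : ℕ) (hj : j ≤ π.steps.length)
    (p : Fin π.steps.length → Fin (u ++ v).length)
    (hch : ∀ i : Fin π.steps.length, (p i : ℕ) < u.length ↔ (i : ℕ) < j) :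
    bwd π u v j hj (fwdA π u v j p hch) (fwdB π u v j hj p hch) = p := by
  funext i
  apply Fin.ext
  by_cases hi : (i : ℕ) < j
  · rw [bwd_val_of_lt π u v j hj _ _ i hi]
    rfl
  · rw [bwd_val_of_ge π u v j hj _ _ i hi]
    have hb : j + ((i : ℕ) - j) < π.steps.length := by have := i.isLt; omega
    show u.length + ((p ⟨j + ((i : ℕ) - j), hb⟩ : ℕ) - u.length) = (p i : ℕ)
    have hpi : p ⟨j + ((i : ℕ) - j), hb⟩ = p i := by
      congr 1
      apply Fin.ext
      show j + ((i : ℕ) - j) = (i : ℕ)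
      omega
    rw [hpi]
    have := (hch i).not.mpr hi
    omega

lemma fwdA_bwd (π : QPath n A) (u v : List A) (j : ℕ) (hj : j ≤ π.steps.length)
    (q₁ : Fin (π.take j).steps.length → Fin u.length)
    (q₂ : Fin (π.drop j).steps.length → Fin v.length)
    (hch : ∀ i : Fin π.steps.length,
      (bwd π u v j hj q₁ q₂ i : ℕ) < u.length ↔ (i : ℕ) < j) :
    fwdA π u v j (bwd π u v j hj q₁ q₂) hch = q₁ := by
  funext a
  apply Fin.ext
  have haj : (a : ℕ) < j := by have h0 := take_steps_len π j; have := a.isLt; omega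
  have ha : (a : ℕ) < π.steps.length := by
    have h0 := take_steps_len π j; have := a.isLt; omega
  show (bwd π u v j hj q₁ q₂ ⟨(a : ℕ), ha⟩ : ℕ) = (q₁ a : ℕ)
  rw [bwd_val_of_lt π u v j hj q₁ q₂ ⟨(a : ℕ), ha⟩ haj]

lemma fwdB_bwd (π : QPath n A) (u v : List A) (j : ℕ) (hj : j ≤ π.steps.length)
    (q₁ : Fin (π.take j).steps.length → Fin u.length)
    (q₂ : Fin (π.drop j).steps.length → Fin v.length)
    (hch : ∀ i : Fin π.steps.length,
      (bwd π u v j hj q₁ q₂ i : ℕ) < u.length ↔ (i : ℕ) < j) :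
    fwdB π u v j hj (bwd π u v j hj q₁ q₂) hch = q₂ := by
  funext b
  apply Fin.ext
  have hb : j + (b : ℕ) < π.steps.length := by
    have h0 := drop_steps_len π j; have := b.isLt; omega
  have hb2 : j + (b : ℕ) - j < (π.drop j).steps.length := by
    have h0 := drop_steps_len π j; have := b.isLt; omega
  show (bwd π u v j hj q₁ q₂ ⟨j + (b : ℕ), hb⟩ : ℕ) - u.length = (q₂ b : ℕ)
  rw [bwd_val_of_ge π u v j hj q₁ q₂ ⟨j + (b : ℕ), hb⟩ (by show ¬ j + (b : ℕ) < j; omega)]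
  have harg : (⟨(⟨j + (b : ℕ), hb⟩ : Fin π.steps.length) - j, hb2⟩ :
      Fin (π.drop j).steps.length) = b := by
    apply Fin.ext
    show j + (b : ℕ) - j = (b : ℕ)
    omega
  show u.length + (q₂ ⟨j + (b : ℕ) - j, hb2⟩ : ℕ) - u.length = (q₂ b : ℕ)
  have harg2 : (⟨j + (b : ℕ) - j, hb2⟩ : Fin (π.drop j).steps.length) = b := by
    apply Fin.ext
    show j + (b : ℕ) - j = (b : ℕ)
    omega
  rw [harg2]
  omega

end Helpers3
section Helpers4a

open Finset

attribute [local instance] Classical.propDecidable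

variable {n : ℕ} {A : Type*}

lemma ex_left (π : QPath n A) (u v : List A) (j : ℕ)
    (p : Fin π.steps.length → Fin (u ++ v).length)
    (hch : ∀ i : Fin π.steps.length, (p i : ℕ) < u.length ↔ (i : ℕ) < j)
    (iu : Fin (u ++ v).length) (a : Fin u.length) (hiu : (iu : ℕ) = (a : ℕ)) :
    (∃ j', p j' = iu) ↔ (∃ a', fwdA π u v j p hch a' = a) := by
  constructor
  · rintro ⟨j', hj'⟩
    have hv : (p j' : ℕ) = (a : ℕ) := by rw [hj', hiu]
    have hja : (j' : ℕ) < j := (hch j').mp (by rw [hv]; exact a.isLt)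
    have hlt : (j' : ℕ) < (π.take j).steps.length := by
      have h0 := take_steps_len π j; have := j'.isLt; omega
    exact ⟨⟨(j' : ℕ), hlt⟩, Fin.ext hv⟩
  · rintro ⟨a', ha'⟩
    have ha : (a' : ℕ) < π.steps.length := by
      have h0 := take_steps_len π j; have := a'.isLt; omega
    refine ⟨⟨(a' : ℕ), ha⟩, Fin.ext ?_⟩
    rw [hiu]
    exact congrArg Fin.val ha'

lemma card_left (π : QPath n A) (u v : List A) (j : ℕ)
    (p : Fin π.steps.length → Fin (u ++ v).length)
    (hch : ∀ i : Fin π.steps.length, (p i : ℕ) < u.length ↔ (i : ℕ) < j)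
    (iu : Fin (u ++ v).length) (a : Fin u.length) (hiu : (iu : ℕ) = (a : ℕ)) :
    ((Finset.univ.filter fun j' => p j' < iu)).card =
      ((Finset.univ.filter fun a' => fwdA π u v j p hch a' < a)).card := by
  have key1 : ∀ j' : Fin π.steps.length, p j' < iu →
      (j' : ℕ) < (π.take j).steps.length := by
    intro j' h
    have hv : (p j' : ℕ) < (a : ℕ) := by
      have : (p j' : ℕ) < (iu : ℕ) := h
      omega
    have := (hch j').mp (by have := a.isLt; omega)
    have h0 := take_steps_len π j
    omega
  refine Finset.card_bij'
    (fun j' hj' => (⟨(j' : ℕ),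
      key1 j' (Finset.mem_filter.mp hj').2⟩ : Fin (π.take j).steps.length))
    (fun a' _ => (⟨(a' : ℕ), by
      have h0 := take_steps_len π j; have := a'.isLt; omega⟩ : Fin π.steps.length))
    ?_ ?_ ?_ ?_
  · intro j' hj'
    have h := (Finset.mem_filter.mp hj').2
    refine Finset.mem_filter.mpr ⟨Finset.mem_univ _, ?_⟩
    show (p j' : ℕ) < (a : ℕ)
    have : (p j' : ℕ) < (iu : ℕ) := h
    omega
  · intro a' ha'
    have h := (Finset.mem_filter.mp ha').2
    refine Finset.mem_filter.mpr ⟨Finset.mem_univ _, ?_⟩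
    show (fwdA π u v j p hch a' : ℕ) < (iu : ℕ)
    have : (fwdA π u v j p hch a' : ℕ) < (a : ℕ) := h
    omega
  · intro j' _
    apply Fin.ext
    rfl
  · intro a' _
    apply Fin.ext
    rfl

end Helpers4a
section Helpers4b

open Finset

attribute [local instance] Classical.propDecidable

variable {n : ℕ} {A : Type*}

lemma ex_right (π : QPath n A) (u v : List A) (j : ℕ) (hj : j ≤ π.steps.length)
    (p : Fin π.steps.length → Fin (u ++ v).length)
    (hch : ∀ i : Fin π.steps.length, (p i : ℕ) < u.length ↔ (i : ℕ) < j)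
    (ib : Fin (u ++ v).length) (b : Fin v.length) (hib : (ib : ℕ) = u.length + (b : ℕ)) :
    (∃ j', p j' = ib) ↔ (∃ b', fwdB π u v j hj p hch b' = b) := by
  have hgeu : ∀ i : Fin π.steps.length, ¬ (i : ℕ) < j → u.length ≤ (p i : ℕ) := by
    intro i hi
    have := (hch i).not.mpr hi
    omega
  constructor
  · rintro ⟨j', hj'⟩
    have hv : (p j' : ℕ) = u.length + (b : ℕ) := by rw [hj', hib]
    have hja : ¬ (j' : ℕ) < j := by
      intro hlt
      have := (hch j').mpr hlt
      omega
    have hlt : (j' : ℕ) - j < (π.drop j).steps.length := by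
      have h0 := drop_steps_len π j; have := j'.isLt; omega
    refine ⟨⟨(j' : ℕ) - j, hlt⟩, Fin.ext ?_⟩
    have hbb : j + ((j' : ℕ) - j) < π.steps.length := by have := j'.isLt; omega
    show (p ⟨j + ((j' : ℕ) - j), hbb⟩ : ℕ) - u.length = (b : ℕ)
    have hidx : (⟨j + ((j' : ℕ) - j), hbb⟩ : Fin π.steps.length) = j' :=
      Fin.ext (by show j + ((j' : ℕ) - j) = (j' : ℕ); omega)
    rw [hidx, hv]
    omega
  · rintro ⟨b', hb'⟩
    have hbb : j + (b' : ℕ) < π.steps.length := by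
      have h0 := drop_steps_len π j; have := b'.isLt; omega
    refine ⟨⟨j + (b' : ℕ), hbb⟩, Fin.ext ?_⟩
    rw [hib]
    have hfw2 : (p ⟨j + (b' : ℕ), hbb⟩ : ℕ) - u.length = (b : ℕ) := congrArg Fin.val hb'
    have := hgeu ⟨j + (b' : ℕ), hbb⟩ (by show ¬ j + (b' : ℕ) < j; omega)
    show (p ⟨j + (b' : ℕ), hbb⟩ : ℕ) = u.length + (b : ℕ)
    omega

lemma card_right (π : QPath n A) (u v : List A) (j : ℕ) (hj : j ≤ π.steps.length)
    (p : Fin π.steps.length → Fin (u ++ v).length)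
    (hch : ∀ i : Fin π.steps.length, (p i : ℕ) < u.length ↔ (i : ℕ) < j)
    (ib : Fin (u ++ v).length) (b : Fin v.length) (hib : (ib : ℕ) = u.length + (b : ℕ)) :
    ((Finset.univ.filter fun j' => p j' < ib)).card =
      j + ((Finset.univ.filter fun b' => fwdB π u v j hj p hch b' < b)).card := by
  have hgeu : ∀ i : Fin π.steps.length, ¬ (i : ℕ) < j → u.length ≤ (p i : ℕ) := by
    intro i hi
    have := (hch i).not.mpr hi
    omega
  have hsplit := Finset.card_filter_add_card_filter_not
    (s := (Finset.univ.filter fun j' => p j' < ib))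
    (p := fun i : Fin π.steps.length => (i : ℕ) < j)
  rw [Finset.filter_filter, Finset.filter_filter] at hsplit
  have h1 : ((Finset.univ.filter fun i : Fin π.steps.length =>
      p i < ib ∧ (i : ℕ) < j)).card = j := by
    rw [Finset.filter_congr (q := fun i : Fin π.steps.length => (i : ℕ) < j)
      (fun i _ => by
        constructor
        · intro h; exact h.2
        · intro h
          refine ⟨?_, h⟩
          have := (hch i).mpr h
          show (p i : ℕ) < (ib : ℕ)
          omega)]
    exact card_filter_val_lt hj
  have h2 : ((Finset.univ.filter fun i : Fin π.steps.length =>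
      p i < ib ∧ ¬ (i : ℕ) < j)).card =
      ((Finset.univ.filter fun b' => fwdB π u v j hj p hch b' < b)).card := by
    have key2 : ∀ i : Fin π.steps.length, ¬ (i : ℕ) < j →
        (i : ℕ) - j < (π.drop j).steps.length := by
      intro i hi
      have h0 := drop_steps_len π j; have := i.isLt; omega
    refine Finset.card_bij'
      (fun i hi => (⟨(i : ℕ) - j,
        key2 i (Finset.mem_filter.mp hi).2.2⟩ : Fin (π.drop j).steps.length))
      (fun b' _ => (⟨j + (b' : ℕ), by
        have h0 := drop_steps_len π j; have := b'.isLt; omega⟩ : Fin π.steps.length))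
      ?_ ?_ ?_ ?_
    · intro i hi
      obtain ⟨-, hQ, hij⟩ := Finset.mem_filter.mp hi
      refine Finset.mem_filter.mpr ⟨Finset.mem_univ _, ?_⟩
      have hbb : j + ((i : ℕ) - j) < π.steps.length := by have := i.isLt; omega
      show (p ⟨j + ((i : ℕ) - j), hbb⟩ : ℕ) - u.length < (b : ℕ)
      have hidx : (⟨j + ((i : ℕ) - j), hbb⟩ : Fin π.steps.length) = i :=
        Fin.ext (by show j + ((i : ℕ) - j) = (i : ℕ); omega)
      rw [hidx]
      have hQ' : (p i : ℕ) < (ib : ℕ) := hQ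
      have := hgeu i hij
      omega
    · intro b' hb'
      have h := (Finset.mem_filter.mp hb').2
      refine Finset.mem_filter.mpr ⟨Finset.mem_univ _, ?_, ?_⟩
      · have hbb : j + (b' : ℕ) < π.steps.length := by
          have h0 := drop_steps_len π j; have := b'.isLt; omega
        show (p ⟨j + (b' : ℕ), hbb⟩ : ℕ) < (ib : ℕ)
        have hfw : (p ⟨j + (b' : ℕ), hbb⟩ : ℕ) - u.length < (b : ℕ) := h
        have := hgeu ⟨j + (b' : ℕ), hbb⟩ (by show ¬ j + (b' : ℕ) < j; omega)
        omega
      · show ¬ j + (b' : ℕ) < j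
        omega
    · intro i hi
      obtain ⟨-, -, hij⟩ := Finset.mem_filter.mp hi
      apply Fin.ext
      show j + ((i : ℕ) - j) = (i : ℕ)
      omega
    · intro b' _
      apply Fin.ext
      show j + (b' : ℕ) - j = (b' : ℕ)
      omega
  omega

end Helpers4b
section Helpers4c

open Finset

attribute [local instance] Classical.propDecidable

variable {n : ℕ} {A : Type*}

lemma get_left {A : Type*} (u v : List A) (iu : Fin (u ++ v).length) (a : Fin u.length)
    (hiu : (iu : ℕ) = (a : ℕ)) : (u ++ v).get iu = u.get a := by
  have hidx : iu = (⟨(a : ℕ), by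
      have := a.isLt; have := (List.length_append : (u ++ v).length = u.length + v.length); omega⟩ : Fin (u ++ v).length) :=
    Fin.ext hiu
  rw [hidx]
  simp only [List.get_eq_getElem]
  exact List.getElem_append_left a.isLt

lemma get_right {A : Type*} (u v : List A) (ib : Fin (u ++ v).length) (b : Fin v.length)
    (hib : (ib : ℕ) = u.length + (b : ℕ)) : (u ++ v).get ib = v.get b := by
  have hidx : ib = (⟨u.length + (b : ℕ), by
      have := b.isLt; have := (List.length_append : (u ++ v).length = u.length + v.length); omega⟩ : Fin (u ++ v).length) :=
    Fin.ext hib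
  rw [hidx]
  simp only [List.get_eq_getElem]
  rw [List.getElem_append_right (Nat.le_add_right _ _)]
  exact getElem_idx_congr v (by omega) _

set_option maxHeartbeats 1000000 in
lemma occMonomial_split {S : Type*} [CommSemiring S] (π : QPath n A) (u v : List A) (j : ℕ)
    (hj : j ≤ π.steps.length)
    (p : Fin π.steps.length → Fin (u ++ v).length)
    (hocc : IsOcc π (u ++ v) p)
    (hch : ∀ i : Fin π.steps.length, (p i : ℕ) < u.length ↔ (i : ℕ) < j) :
    occMonomial S π (u ++ v) p =
      occMonomial S (π.take j) u (fwdA π u v j p hch) *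
      occMonomial S (π.drop j) v (fwdB π u v j hj p hch) := by
  have hL : (u ++ v).length = u.length + v.length := List.length_append
  have heL : ∀ a : Fin u.length,
      ((finSumFinEquiv.trans (finCongr hL.symm)) (Sum.inl a) : ℕ) = (a : ℕ) := by
    intro a; simp
  have heR : ∀ b : Fin v.length,
      ((finSumFinEquiv.trans (finCongr hL.symm)) (Sum.inr b) : ℕ) = u.length + (b : ℕ) := by
    intro b; simp
  unfold occMonomial
  rw [← Equiv.prod_comp (finSumFinEquiv.trans (finCongr hL.symm)), Fintype.prod_sum_type]
  congr 1
  · apply Finset.prod_congr rfl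
    intro a _
    apply if_congr (ex_left π u v j p hch _ a (heL a)) rfl
    rw [get_left u v _ a (heL a), card_left π u v j p hch _ a (heL a),
      ← vtx_take π j _ (le_trans (Finset.card_filter_le _ _) (by simp))]
  · apply Finset.prod_congr rfl
    intro b _
    apply if_congr (ex_right π u v j hj p hch _ b (heR b)) rfl
    rw [get_right u v _ b (heR b), card_right π u v j hj p hch _ b (heR b),
      ← vtx_drop π j _ hj (le_trans (Finset.card_filter_le _ _) (by simp))]

end Helpers4c
section Helpers5

open Finset

attribute [local instance] Classical.propDecidable

variable {n : ℕ} {A : Type*}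

lemma mem_split_occ {π : QPath n A} {u v : List A} {j : ℕ}
    {p : Fin π.steps.length → Fin (u ++ v).length}
    (hp : p ∈ Finset.filter (fun p => splitIdx u.length p = j)
      (Finset.univ.filter (IsOcc π (u ++ v)))) : IsOcc π (u ++ v) p :=
  (Finset.mem_filter.mp (Finset.mem_filter.mp hp).1).2

lemma mem_split_char {π : QPath n A} {u v : List A} {j : ℕ}
    (p : Fin π.steps.length → Fin (u ++ v).length)
    (hp : p ∈ Finset.filter (fun p => splitIdx u.length p = j)
      (Finset.univ.filter (IsOcc π (u ++ v)))) :
    ∀ i : Fin π.steps.length, (p i : ℕ) < u.length ↔ (i : ℕ) < j := by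
  intro i
  rw [char_of (mem_split_occ hp) i, (Finset.mem_filter.mp hp).2]

end Helpers5

set_option maxHeartbeats 1000000 in
/-- `f_π^{uv} = Σ_{π = αβ} f_α^u f_β^v` (the factorisations of `π` being
exactly the pairs `(π.take j, π.drop j)` for `0 ≤ j ≤ |π|`), and `f_π^ε` is `1` on empty
paths and `0` otherwise; that is, `w ↦ (π ↦ f_π^w)` is a monoid homomorphism from `Σ*` to
the multiplicative monoid given by the convolution product on path-indexed families. -/
theorem fPoly_convolution_morphism {S : Type*} [CommSemiring S] [Nontrivial S]
    {n : ℕ} (hn : 1 ≤ n) {A : Type*} :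
    (∀ (u v : List A) (π : QPath n A),
        fPoly S π (u ++ v) =
          ∑ j ∈ Finset.range (π.steps.length + 1),
            fPoly S (π.take j) u * fPoly S (π.drop j) v) ∧
    (∀ π : QPath n A,
        fPoly S π ([] : List A) = if π.steps = [] then 1 else 0) := by
  constructor
  · intro u v π
    have hmap : ∀ p ∈ Finset.univ.filter (IsOcc π (u ++ v)),
        splitIdx u.length p ∈ Finset.range (π.steps.length + 1) := by
      intro p _
      have := splitIdx_le (m := u.length) p
      exact Finset.mem_range.mpr (by omega)
    rw [fPoly, ← Finset.sum_fiberwise_of_maps_to hmap (occMonomial S π (u ++ v))]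
    apply Finset.sum_congr rfl
    intro j hjr
    have hj : j ≤ π.steps.length := Nat.lt_succ_iff.mp (Finset.mem_range.mp hjr)
    rw [fPoly, fPoly, Finset.sum_mul_sum, ← Finset.sum_product']
    refine Finset.sum_bij'
      (fun p hp => (fwdA π u v j p (mem_split_char p hp),
        fwdB π u v j hj p (mem_split_char p hp)))
      (fun q _ => bwd π u v j hj q.1 q.2)
      ?_ ?_ ?_ ?_ ?_
    · intro p hp
      refine Finset.mem_product.mpr ⟨?_, ?_⟩
      · exact Finset.mem_filter.mpr ⟨Finset.mem_univ _,
          isOcc_fwdA π u v j p (mem_split_occ hp) (mem_split_char p hp)⟩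
      · exact Finset.mem_filter.mpr ⟨Finset.mem_univ _,
          isOcc_fwdB π u v j hj p (mem_split_occ hp) (mem_split_char p hp)⟩
    · intro q hq
      obtain ⟨h1, h2⟩ := Finset.mem_product.mp hq
      refine Finset.mem_filter.mpr ⟨Finset.mem_filter.mpr ⟨Finset.mem_univ _, ?_⟩, ?_⟩
      · exact isOcc_bwd π u v j hj q.1 q.2 (Finset.mem_filter.mp h1).2
          (Finset.mem_filter.mp h2).2
      · exact splitIdx_bwd π u v j hj q.1 q.2
    · intro p hp
      exact bwd_fwd π u v j hj p (mem_split_char p hp)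
    · intro q hq
      exact Prod.ext
        (fwdA_bwd π u v j hj q.1 q.2 (bwd_char π u v j hj q.1 q.2))
        (fwdB_bwd π u v j hj q.1 q.2 (bwd_char π u v j hj q.1 q.2))
    · intro p hp
      exact occMonomial_split π u v j hj p (mem_split_occ hp) (mem_split_char p hp)
  · intro π
    by_cases h : π.steps = []
    · rw [if_pos h]
      have hempty : IsEmpty (Fin π.steps.length) := by rw [h]; exact Fin.isEmpty
      have hall : ∀ p : Fin π.steps.length → Fin ([] : List A).length,
          IsOcc π ([] : List A) p := by
        intro p
        exact ⟨fun a b _ => hempty.elim a, fun a => hempty.elim a⟩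
      rw [fPoly, Finset.filter_true_of_mem (fun p _ => hall p)]
      haveI : Unique (Fin π.steps.length → Fin ([] : List A).length) :=
        Pi.uniqueOfIsEmpty _
      rw [Finset.univ_unique, Finset.sum_singleton]
      rw [occMonomial]
      have : IsEmpty (Fin ([] : List A).length) := by exact Fin.isEmpty
      rw [Finset.univ_eq_empty, Finset.prod_empty]
    · rw [if_neg h]
      have hne : π.steps.length ≠ 0 := by
        intro h0
        exact h (List.eq_nil_of_length_eq_zero h0)
      haveI : IsEmpty (Fin π.steps.length → Fin ([] : List A).length) :=
        ⟨fun f => (f ⟨0, Nat.pos_of_ne_zero hne⟩).elim0⟩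
      rw [fPoly, Finset.univ_eq_empty, Finset.filter_empty, Finset.sum_empty]
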